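/- arXiv:1810.04816 — 2 statements merged into one kernel-verified Lean document; each statement's English description precedes it below -/
import Mathlib

section
/- In the hypergraph Chung-Lu model, the expected d-degree of vertex v_i equals |E_d| \cdot d \cdot deg(v_i)/vol(V), where the d-degree of v_i in a random hypergraph is \sum_{e \in F_d} m_e(v_i) \cdot 1_{\{e \text{ is an edge}\}}. -/
open Finset Function

lemma nat_key {n : ℕ} (m : Fin n → ℕ) (i : Fin n) (e : ℕ) (h : m i ≠ 0)
    (hs : ∑ j, m j = e + 1) :
    m i * Nat.multinomial Finset.univ m
      = (e + 1) * Nat.multinomial Finset.univ (update m i (m i - 1)) := by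
  set m' := update m i (m i - 1) with hm'
  have hprodpos : 0 < ∏ j, Nat.factorial (m' j) :=
    Finset.prod_pos fun j _ => (m' j).factorial_pos
  apply Nat.eq_of_mul_eq_mul_right hprodpos
  have hprod : m i * ∏ j, Nat.factorial (m' j) = ∏ j, Nat.factorial (m j) := by
    rw [← Finset.mul_prod_erase Finset.univ (fun j => Nat.factorial (m' j)) (mem_univ i),
      ← Finset.mul_prod_erase Finset.univ (fun j => Nat.factorial (m j)) (mem_univ i)]
    have he : ∏ j ∈ Finset.univ.erase i, Nat.factorial (m' j)
        = ∏ j ∈ Finset.univ.erase i, Nat.factorial (m j) :=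
      Finset.prod_congr rfl fun j hj => by
        rw [hm', update_of_ne (Finset.ne_of_mem_erase hj)]
    rw [he, hm', update_self, ← mul_assoc,
      Nat.mul_factorial_pred h]
  have hs' : ∑ j, m' j = e := by
    rw [hm', Finset.sum_update_of_mem (mem_univ i), Finset.sdiff_singleton_eq_erase]
    have := Finset.add_sum_erase Finset.univ m (mem_univ i)
    omega
  calc m i * Nat.multinomial Finset.univ m * ∏ j, Nat.factorial (m' j)
      = (∏ j, Nat.factorial (m j)) * Nat.multinomial Finset.univ m := by
        rw [mul_comm (m i), mul_assoc, hprod, mul_comm]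
    _ = Nat.factorial (e + 1) := by rw [Nat.multinomial_spec, hs]
    _ = (e + 1) * ((∏ j, Nat.factorial (m' j)) * Nat.multinomial Finset.univ m') := by
        rw [Nat.multinomial_spec, hs', Nat.factorial_succ]
    _ = (e + 1) * Nat.multinomial Finset.univ m' * ∏ j, Nat.factorial (m' j) := by ring

lemma aux {n : ℕ} (p : Fin n → ℝ) (hp : ∑ j, p j = 1) (d : ℕ) (i : Fin n) :
    ∑ m ∈ Finset.piAntidiag Finset.univ d,
      (m i : ℝ) * (Nat.multinomial Finset.univ m : ℝ) * ∏ j, p j ^ m j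
    = d * p i := by
  cases d with
  | zero =>
    rw [Finset.piAntidiag_zero]
    simp
  | succ e =>
    have hfilter :
        ∑ m ∈ Finset.piAntidiag Finset.univ (e+1),
          (m i : ℝ) * (Nat.multinomial Finset.univ m : ℝ) * ∏ j, p j ^ m j
        = ∑ m ∈ (Finset.piAntidiag Finset.univ (e+1)).filter (fun m => m i ≠ 0),
          (m i : ℝ) * (Nat.multinomial Finset.univ m : ℝ) * ∏ j, p j ^ m j := by
      rw [Finset.sum_filter_of_ne]
      intro m _ hne hmi
      exact hne (by simp [hmi])
    rw [hfilter]
    rw [Finset.sum_nbij' (i := fun m => update m i (m i - 1))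
      (j := fun m' => update m' i (m' i + 1))
      (s := (Finset.piAntidiag Finset.univ (e+1)).filter (fun m => m i ≠ 0))
      (t := Finset.piAntidiag Finset.univ e)
      (g := fun m' => ((e:ℝ)+1) * p i *
        ((Nat.multinomial Finset.univ m' : ℝ) * ∏ j, p j ^ m' j))
      (hi := ?_) (hj := ?_) (left_neg := ?_) (right_neg := ?_) (h := ?_)]
    · rw [← Finset.mul_sum, ← Finset.sum_pow_eq_sum_piAntidiag, hp, one_pow, mul_one]
      push_cast; ring
    · intro m hm
      simp only [Finset.mem_filter, Finset.mem_piAntidiag] at hm ⊢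
      obtain ⟨⟨hsum, -⟩, hne⟩ := hm
      have hsum' : ∑ x : Fin n, m x = e + 1 := hsum
      refine ⟨?_, fun j _ => mem_univ j⟩
      rw [Finset.sum_update_of_mem (mem_univ i), Finset.sdiff_singleton_eq_erase]
      have := Finset.add_sum_erase Finset.univ m (mem_univ i)
      omega
    · intro m' hm'
      simp only [Finset.mem_filter, Finset.mem_piAntidiag] at hm' ⊢
      obtain ⟨hsum, -⟩ := hm'
      have hsum' : ∑ x : Fin n, m' x = e := hsum
      refine ⟨⟨?_, fun j _ => mem_univ j⟩, by simp⟩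
      rw [Finset.sum_update_of_mem (mem_univ i), Finset.sdiff_singleton_eq_erase]
      have := Finset.add_sum_erase Finset.univ m' (mem_univ i)
      omega
    · intro m hm
      simp only [Finset.mem_filter] at hm
      have := hm.2
      funext j
      rcases eq_or_ne j i with rfl | hj
      · simp only [update_self]
        omega
      · simp [update_of_ne hj]
    · intro m' _
      funext j
      rcases eq_or_ne j i with rfl | hj
      · simp
      · simp [update_of_ne hj]
    · intro m hm
      simp only [Finset.mem_filter, Finset.mem_piAntidiag] at hm
      obtain ⟨⟨hsum, -⟩, hne⟩ := hm
      have hkey : ((m i : ℝ) * (Nat.multinomial Finset.univ m : ℝ))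
          = ((e:ℝ)+1) * (Nat.multinomial Finset.univ (update m i (m i - 1)) : ℝ) := by
        exact_mod_cast congrArg (Nat.cast (R := ℝ)) (nat_key m i e hne hsum)
      have h1 : ∏ j, p j ^ m j = p i ^ m i * ∏ j ∈ Finset.univ.erase i, p j ^ m j :=
        (Finset.mul_prod_erase Finset.univ (fun j => p j ^ m j) (mem_univ i)).symm
      have h2 : ∏ j, p j ^ update m i (m i - 1) j
          = p i ^ (m i - 1) * ∏ j ∈ Finset.univ.erase i, p j ^ m j := by
        rw [← Finset.mul_prod_erase Finset.univ
          (fun j => p j ^ update m i (m i - 1) j) (mem_univ i)]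
        simp only [update_self]
        congr 1
        exact Finset.prod_congr rfl fun j hj => by
          rw [update_of_ne (Finset.ne_of_mem_erase hj)]
      have h3 : p i ^ m i = p i * p i ^ (m i - 1) := by
        rw [← pow_succ']
        congr 1
        omega
      rw [h1, h2, h3]
      linear_combination (p i * (p i ^ (m i - 1) *
        ∏ j ∈ Finset.univ.erase i, p j ^ m j)) * hkey

/-- **Expected `d`-degree in the hypergraph Chung–Lu model.**
Each multiset `e` of size `d` over `[n]` (encoded by its multiplicity tuple `m`)
is independently an edge with probability
`P(e) = |E_d| ⬝ (d choose m_1,…,m_n) ⬝ ∏ i (p i) ^ m i` where `p i = deg v_i / vol V`.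
The expected `d`-degree of vertex `v_i`, namely `∑_{e ∈ F_d} m_e(v_i) ⬝ P(e)`, equals
`|E_d| ⬝ d ⬝ deg v_i / vol V`. -/
theorem chungLu_hypergraph_expected_d_degree {n : ℕ} (deg : Fin n → ℝ)
    (hdeg : ∀ i, 0 ≤ deg i) (hvol : 0 < ∑ i, deg i) (d : ℕ) (Ed : ℕ)
    (hP : ∀ m ∈ Finset.Nat.antidiagonalTuple n d,
      (Ed : ℝ) * (Nat.multinomial Finset.univ m : ℝ) *
        ∏ i, (deg i / ∑ j, deg j) ^ m i ≤ 1)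
    (i : Fin n) :
    ∑ m ∈ Finset.Nat.antidiagonalTuple n d,
      (m i : ℝ) * ((Ed : ℝ) * (Nat.multinomial Finset.univ m : ℝ) *
        ∏ j, (deg j / ∑ k, deg k) ^ m j)
    = (Ed : ℝ) * d * (deg i / ∑ j, deg j) := by
  have hp : ∑ j, (deg j / ∑ k, deg k) = 1 := by
    rw [← Finset.sum_div, div_self hvol.ne']
  have := aux (fun j => deg j / ∑ k, deg k) hp d i
  rw [← Finset.piAntidiag_univ_fin_eq_antidiagonalTuple]
  calc ∑ m ∈ Finset.piAntidiag Finset.univ d,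
      (m i : ℝ) * ((Ed : ℝ) * (Nat.multinomial Finset.univ m : ℝ) *
        ∏ j, (deg j / ∑ k, deg k) ^ m j)
      = (Ed : ℝ) * ∑ m ∈ Finset.piAntidiag Finset.univ d,
        (m i : ℝ) * (Nat.multinomial Finset.univ m : ℝ) *
          ∏ j, (deg j / ∑ k, deg k) ^ m j := by
        rw [Finset.mul_sum]; exact Finset.sum_congr rfl fun m _ => by ring
    _ = (Ed : ℝ) * (d * (deg i / ∑ j, deg j)) := by rw [this]
    _ = (Ed : ℝ) * d * (deg i / ∑ j, deg j) := by ring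
end

section
/- Let H=(V,E) be a hypergraph. If a partition A of V maximizes the strict hypergraph modularity q_H(\cdot) over all partitions of V, then A equals p(H*) for some canonical representative H* \in S*(H); that is, every optimal partition is induced by the connected components of a sub-hypergraph of H whose edge set consists exactly of the edges internal to its own components. -/
open Classical Finset

variable {V : Type*} [Fintype V] [DecidableEq V]

/-- The degree of a vertex in the hypergraph with edge set `E`:
the number of hyperedges containing it. -/
def hdeg (E : Finset (Finset V)) (v : V) : ℕ := (E.filter (fun e => v ∈ e)).card

/-- The volume of a set of vertices: the sum of their degrees. -/
noncomputable def hvol (E : Finset (Finset V)) (A : Finset V) : ℝ :=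
  ∑ v ∈ A, (hdeg E v : ℝ)

/-- Strict hypergraph modularity of a partition `P`:
`q_H(P) = (1/|E|) ( ∑_{A ∈ P} |{e ∈ E : e ⊆ A}| - ∑_{d ≥ 2} |E_d| ∑_{A ∈ P} (vol A / vol V)^d )`,
where the degree tax is written edgewise as `∑_{e ∈ E} ∑_{A ∈ P} (vol A / vol V)^{|e|}`. -/
noncomputable def hQ (E : Finset (Finset V)) (P : Finpartition (Finset.univ : Finset V)) : ℝ :=
  (1 / (E.card : ℝ)) *
    ((∑ A ∈ P.parts, ((E.filter (fun e => e ⊆ A)).card : ℝ)) -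
      ∑ e ∈ E, ∑ A ∈ P.parts, (hvol E A / hvol E Finset.univ) ^ e.card)

/-- The edges of `E` internal to some part of the partition `P`. -/
def internalEdges (E : Finset (Finset V)) (P : Finpartition (Finset.univ : Finset V)) :
    Finset (Finset V) :=
  E.filter (fun e => ∃ A ∈ P.parts, e ⊆ A)

/-- The partition of `V` into connected components of the hypergraph `(V, E')`
(two vertices are connected when joined by a path of hyperedges). -/
noncomputable def compPartition (E' : Finset (Finset V)) :
    Finpartition (Finset.univ : Finset V) :=
  Finpartition.ofSetoid (Relation.EqvGen.setoid (fun u v => ∃ e ∈ E', u ∈ e ∧ v ∈ e))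

lemma sum_pow_le_pow_sum' {ι : Type*} (s : Finset ι) (x : ι → ℝ) (hx : ∀ i ∈ s, 0 ≤ x i)
    {d : ℕ} (hd : 1 ≤ d) : ∑ i ∈ s, x i ^ d ≤ (∑ i ∈ s, x i) ^ d := by
  obtain ⟨k, rfl⟩ : ∃ k, d = k + 1 := ⟨d - 1, by omega⟩
  have hX : ∀ i ∈ s, x i ≤ ∑ j ∈ s, x j := fun i hi => Finset.single_le_sum hx hi
  calc ∑ i ∈ s, x i ^ (k + 1) ≤ ∑ i ∈ s, x i * (∑ j ∈ s, x j) ^ k := by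
        refine Finset.sum_le_sum fun i hi => ?_
        rw [pow_succ']
        exact mul_le_mul_of_nonneg_left (pow_le_pow_left₀ (hx i hi) (hX i hi) k) (hx i hi)
    _ = (∑ i ∈ s, x i) * (∑ j ∈ s, x j) ^ k := by rw [← Finset.sum_mul]
    _ = (∑ i ∈ s, x i) ^ (k + 1) := (pow_succ' _ _).symm

lemma sum_pow_lt_pow_sum' {ι : Type*} (s : Finset ι) (x : ι → ℝ) (hx : ∀ i ∈ s, 0 < x i)
    {d : ℕ} (hd : 2 ≤ d) (hc : 2 ≤ s.card) : ∑ i ∈ s, x i ^ d < (∑ i ∈ s, x i) ^ d := by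
  obtain ⟨k, rfl⟩ : ∃ k, d = k + 1 := ⟨d - 1, by omega⟩
  have hk : k ≠ 0 := by omega
  have hsne : s.Nonempty := Finset.card_pos.mp (lt_of_lt_of_le two_pos hc)
  have hX : ∀ i ∈ s, x i < ∑ j ∈ s, x j := by
    intro i hi
    obtain ⟨j, hj, hji⟩ := Finset.exists_mem_ne (show 1 < s.card by omega) i
    rw [← Finset.add_sum_erase s x hi]
    have hjer : j ∈ s.erase i := Finset.mem_erase.mpr ⟨hji, hj⟩
    have : 0 < ∑ j' ∈ s.erase i, x j' :=
      lt_of_lt_of_le (hx j hj) (Finset.single_le_sum (fun a ha => (hx a (Finset.mem_of_mem_erase ha)).le) hjer)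
    linarith
  have key : ∑ i ∈ s, x i ^ (k + 1) < ∑ i ∈ s, x i * (∑ j ∈ s, x j) ^ k := by
    refine Finset.sum_lt_sum_of_nonempty hsne fun i hi => ?_
    calc x i ^ (k + 1) = x i * x i ^ k := pow_succ' _ _
      _ < x i * (∑ j ∈ s, x j) ^ k :=
        mul_lt_mul_of_pos_left (pow_lt_pow_left₀ (hX i hi) (hx i hi).le hk) (hx i hi)
  calc ∑ i ∈ s, x i ^ (k + 1) < ∑ i ∈ s, x i * (∑ j ∈ s, x j) ^ k := key
    _ = (∑ i ∈ s, x i) * (∑ j ∈ s, x j) ^ k := by rw [← Finset.sum_mul]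
    _ = (∑ i ∈ s, x i) ^ (k + 1) := (pow_succ' _ _).symm

lemma sum_internal (E : Finset (Finset V)) (hsize : ∀ e ∈ E, 2 ≤ e.card)
    (Q : Finpartition (Finset.univ : Finset V)) :
    ∑ t ∈ Q.parts, (E.filter (fun e => e ⊆ t)).card = (internalEdges E Q).card := by
  classical
  rw [internalEdges, Finset.card_filter]
  simp_rw [Finset.card_filter]
  rw [Finset.sum_comm]
  refine Finset.sum_congr rfl fun e he => ?_
  have hene : e.Nonempty := Finset.card_pos.mp (lt_of_lt_of_le two_pos (hsize e he))
  by_cases h : ∃ t ∈ Q.parts, e ⊆ t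
  · obtain ⟨t0, ht0, het0⟩ := h
    rw [if_pos ⟨t0, ht0, het0⟩]
    have hcongr : ∀ t ∈ Q.parts, (if e ⊆ t then 1 else 0) = if t = t0 then 1 else 0 := by
      intro t ht
      by_cases hts : e ⊆ t
      · obtain ⟨x, hx⟩ := hene
        rw [if_pos hts, if_pos (Q.eq_of_mem_parts ht ht0 (hts hx) (het0 hx))]
      · rw [if_neg hts, if_neg]
        rintro rfl
        exact hts het0
    rw [Finset.sum_congr rfl hcongr, Finset.sum_ite_eq' Q.parts t0 (fun _ => 1), if_pos ht0]
  · rw [if_neg h]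
    exact Finset.sum_eq_zero fun t ht => if_neg fun hts => h ⟨t, ht, hts⟩

/-- **Optimal partitions are induced by canonical representatives.**
Let `H = (V,E)` be a hypergraph with at least one edge, all hyperedges of size at least 2,
and every vertex of positive degree.  If a partition `A` of `V` maximizes the strict
hypergraph modularity `q_H(⬝)` over all partitions of `V`, then `A` is the
connected-component partition of the sub-hypergraph of `H` whose edge set consists exactly
of the edges internal to the parts of `A`; in particular `A ∈ P*(V)` is induced by a
canonical representative. -/
theorem optimal_partition_is_canonical (E : Finset (Finset V)) (hne : E.Nonempty)
    (hsize : ∀ e ∈ E, 2 ≤ e.card) (hdpos : ∀ v : V, 0 < hdeg E v)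
    (A : Finpartition (Finset.univ : Finset V))
    (hopt : ∀ B : Finpartition (Finset.univ : Finset V), hQ E B ≤ hQ E A) :
    A = compPartition (internalEdges E A) := by
  classical
  set r : V → V → Prop := fun u v => ∃ e ∈ internalEdges E A, u ∈ e ∧ v ∈ e with hr
  set P := compPartition (internalEdges E A) with hP
  obtain ⟨e0, he0⟩ := hne
  have hEne : E.Nonempty := ⟨e0, he0⟩
  have he0ne : e0.Nonempty := Finset.card_pos.mp (lt_of_lt_of_le two_pos (hsize e0 he0))
  have hVne : (Finset.univ : Finset V).Nonempty := ⟨he0ne.choose, Finset.mem_univ _⟩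
  -- membership in parts of P corresponds to EqvGen r
  have memP : ∀ u v : V, v ∈ P.part u ↔ Relation.EqvGen r u v := by
    intro u v
    rw [hP]
    exact Finpartition.mem_part_ofSetoid_iff_rel
  -- EqvGen-related vertices lie in the same part of A
  have samepart : ∀ u v : V, Relation.EqvGen r u v → A.part u = A.part v := by
    intro u v h
    induction h with
    | rel a b hab =>
      obtain ⟨e, he, ha, hb⟩ := hab
      obtain ⟨-, t, ht, het⟩ := Finset.mem_filter.mp he
      rw [A.part_eq_of_mem ht (het ha), A.part_eq_of_mem ht (het hb)]
    | refl => rfl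
    | symm _ _ _ ih => exact ih.symm
    | trans _ _ _ _ _ ih1 ih2 => exact ih1.trans ih2
  -- P refines A
  have hsub : ∀ B ∈ P.parts, ∀ v ∈ B, B ⊆ A.part v := by
    intro B hB v hv u hu
    have hBv : B = P.part v := (P.part_eq_of_mem hB hv).symm
    rw [hBv] at hu
    have h1 : Relation.EqvGen r v u := (memP v u).mp hu
    rw [samepart v u h1]
    exact A.mem_part (Finset.mem_univ u)
  -- internal edges coincide
  have hIE : internalEdges E P = internalEdges E A := by
    ext e
    simp only [internalEdges, Finset.mem_filter]
    constructor
    · rintro ⟨heE, B, hB, heB⟩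
      obtain ⟨v, hv⟩ := P.nonempty_of_mem_parts hB
      exact ⟨heE, A.part v, A.part_mem.mpr (Finset.mem_univ v), heB.trans (hsub B hB v hv)⟩
    · rintro ⟨heE, t, ht, het⟩
      have hene : e.Nonempty := Finset.card_pos.mp (lt_of_lt_of_le two_pos (hsize e heE))
      obtain ⟨v, hv⟩ := hene
      refine ⟨heE, P.part v, P.part_mem.mpr (Finset.mem_univ v), fun u hu => ?_⟩
      exact (memP v u).mpr (Relation.EqvGen.rel _ _
        ⟨e, Finset.mem_filter.mpr ⟨heE, t, ht, het⟩, hv, hu⟩)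
  -- fibers
  set F : Finset V → Finset (Finset V) := fun t => P.parts.filter (fun B => B ⊆ t) with hF
  have hdisjF : ((A.parts : Set (Finset V))).PairwiseDisjoint F := by
    intro t1 h1 t2 h2 hne12
    refine Finset.disjoint_left.mpr fun B hB1 hB2 => ?_
    simp only [hF, Finset.mem_filter] at hB1 hB2
    obtain ⟨v, hv⟩ := P.nonempty_of_mem_parts hB1.1
    exact hne12 (A.eq_of_mem_parts h1 h2 (hB1.2 hv) (hB2.2 hv))
  have hbiU : A.parts.biUnion F = P.parts := by
    ext B
    simp only [Finset.mem_biUnion, hF, Finset.mem_filter]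
    constructor
    · rintro ⟨t, ht, hB, hBt⟩
      exact hB
    · intro hB
      obtain ⟨v, hv⟩ := P.nonempty_of_mem_parts hB
      exact ⟨A.part v, A.part_mem.mpr (Finset.mem_univ v), hB, hsub B hB v hv⟩
  have hfiber_sum : ∀ f : Finset V → ℝ,
      ∑ B ∈ P.parts, f B = ∑ t ∈ A.parts, ∑ B ∈ F t, f B := by
    intro f
    rw [← hbiU, Finset.sum_biUnion hdisjF]
  -- volumes
  have hvolpos : ∀ B : Finset V, B.Nonempty → 0 < hvol E B := by
    intro B hB
    exact Finset.sum_pos (fun v _ => by exact_mod_cast hdpos v) hB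
  have hvolV : 0 < hvol E Finset.univ := hvolpos _ hVne
  have hUnionF : ∀ t ∈ A.parts, (F t).biUnion id = t := by
    intro t ht
    ext v
    simp only [Finset.mem_biUnion, id, hF, Finset.mem_filter]
    constructor
    · rintro ⟨B, ⟨hB, hBt⟩, hv⟩
      exact hBt hv
    · intro hv
      refine ⟨P.part v, ⟨P.part_mem.mpr (Finset.mem_univ v), ?_⟩, P.mem_part (Finset.mem_univ v)⟩
      have h2 := hsub (P.part v) (P.part_mem.mpr (Finset.mem_univ v)) v (P.mem_part (Finset.mem_univ v))
      rwa [A.part_eq_of_mem ht hv] at h2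
  have hdisjP : ((F ·) : Finset V → Finset (Finset V)) = F := rfl
  have hvolfib : ∀ t ∈ A.parts, ∑ B ∈ F t, hvol E B = hvol E t := by
    intro t ht
    have hpd : ((F t : Set (Finset V))).PairwiseDisjoint id := by
      refine P.supIndep.pairwiseDisjoint.subset ?_
      intro B hB
      exact Finset.mem_filter.mp hB |>.1
    calc ∑ B ∈ F t, hvol E B = ∑ v ∈ (F t).biUnion id, (hdeg E v : ℝ) :=
          (Finset.sum_biUnion hpd).symm
      _ = hvol E t := by rw [hUnionF t ht]; rfl
  have hFne : ∀ t ∈ A.parts, (F t).Nonempty := by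
    intro t ht
    obtain ⟨v, hv⟩ := A.nonempty_of_mem_parts ht
    refine ⟨P.part v, ?_⟩
    rw [← hUnionF t ht] at hv
    obtain ⟨B, hB, hvB⟩ := Finset.mem_biUnion.mp hv
    have : P.part v = B := P.part_eq_of_mem (Finset.mem_filter.mp hB).1 hvB
    rwa [this]
  -- edge sums coincide
  have hedge : (∑ B ∈ P.parts, ((E.filter (fun e => e ⊆ B)).card : ℝ))
      = ∑ t ∈ A.parts, ((E.filter (fun e => e ⊆ t)).card : ℝ) := by
    rw [← Nat.cast_sum, ← Nat.cast_sum, sum_internal E hsize P, sum_internal E hsize A, hIE]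
  -- nonstrict tax inequality for each part
  have hxnn : ∀ B ∈ P.parts, (0:ℝ) ≤ hvol E B / hvol E Finset.univ := by
    intro B hB
    exact div_nonneg (hvolpos B (P.nonempty_of_mem_parts hB)).le hvolV.le
  have htax_le : ∀ e ∈ E, ∀ t ∈ A.parts,
      ∑ B ∈ F t, (hvol E B / hvol E Finset.univ) ^ e.card
        ≤ (hvol E t / hvol E Finset.univ) ^ e.card := by
    intro e heE t ht
    have h1 : ∑ B ∈ F t, (hvol E B / hvol E Finset.univ) = hvol E t / hvol E Finset.univ := by
      rw [← Finset.sum_div, hvolfib t ht]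
    calc ∑ B ∈ F t, (hvol E B / hvol E Finset.univ) ^ e.card
        ≤ (∑ B ∈ F t, hvol E B / hvol E Finset.univ) ^ e.card :=
          sum_pow_le_pow_sum' _ _ (fun B hB => hxnn B (Finset.mem_filter.mp hB).1)
            (by have := hsize e heE; omega)
      _ = _ := by rw [h1]
  by_cases hbad : ∃ t ∈ A.parts, 2 ≤ (F t).card
  · -- strict improvement: contradiction
    exfalso
    obtain ⟨t0, ht0, hc0⟩ := hbad
    have htax : ∀ e ∈ E,
        ∑ B ∈ P.parts, (hvol E B / hvol E Finset.univ) ^ e.card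
          < ∑ t ∈ A.parts, (hvol E t / hvol E Finset.univ) ^ e.card := by
      intro e heE
      rw [hfiber_sum]
      refine Finset.sum_lt_sum (fun t ht => htax_le e heE t ht) ⟨t0, ht0, ?_⟩
      have h1 : ∑ B ∈ F t0, (hvol E B / hvol E Finset.univ)
          = hvol E t0 / hvol E Finset.univ := by
        rw [← Finset.sum_div, hvolfib t0 ht0]
      calc ∑ B ∈ F t0, (hvol E B / hvol E Finset.univ) ^ e.card
          < (∑ B ∈ F t0, hvol E B / hvol E Finset.univ) ^ e.card := by
            refine sum_pow_lt_pow_sum' _ _ ?_ (hsize e heE) hc0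
            intro B hB
            exact div_pos (hvolpos B (P.nonempty_of_mem_parts (Finset.mem_filter.mp hB).1)) hvolV
        _ = _ := by rw [h1]
    have htaxtot : ∑ e ∈ E, ∑ B ∈ P.parts, (hvol E B / hvol E Finset.univ) ^ e.card
        < ∑ e ∈ E, ∑ t ∈ A.parts, (hvol E t / hvol E Finset.univ) ^ e.card :=
      Finset.sum_lt_sum_of_nonempty hEne htax
    have hQlt : hQ E A < hQ E P := by
      unfold hQ
      have hEpos : (0:ℝ) < (E.card : ℝ) := by
        exact_mod_cast Finset.card_pos.mpr hEne
      have h1 : (0:ℝ) < 1 / (E.card : ℝ) := by positivity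
      refine mul_lt_mul_of_pos_left ?_ h1
      rw [hedge]
      linarith
    exact absurd (hopt P) (not_le.mpr hQlt)
  · -- all fibers are singletons: A = P
    push_neg at hbad
    have hAP : A.parts ⊆ P.parts := by
      intro t ht
      have hc1 : (F t).card = 1 := by
        have := hbad t ht
        have := Finset.card_pos.mpr (hFne t ht)
        omega
      obtain ⟨B, hB⟩ := Finset.card_eq_one.mp hc1
      have hBmem : B ∈ F t := by rw [hB]; exact Finset.mem_singleton_self B
      have hBP : B ∈ P.parts := (Finset.mem_filter.mp hBmem).1
      have hBt : B ⊆ t := (Finset.mem_filter.mp hBmem).2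
      have hveq : hvol E B = hvol E t := by
        have := hvolfib t ht
        rwa [hB, Finset.sum_singleton] at this
      have hBeq : B = t := by
        refine Finset.Subset.antisymm hBt ?_
        by_contra hts
        obtain ⟨v, hv, hvB⟩ := Finset.not_subset.mp hts
        have : hvol E B < hvol E t := by
          refine Finset.sum_lt_sum_of_subset hBt hv hvB ?_ ?_
          · exact_mod_cast hdpos v
          · intro w _ _
            exact Nat.cast_nonneg _
        exact absurd hveq (ne_of_lt this)
      rwa [← hBeq]
    -- parts subset implies equality
    have hcard : P.parts.card ≤ A.parts.card := by
      by_contra hlt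
      push_neg at hlt
      have hnepq : A.parts ≠ P.parts := fun hEq => by rw [hEq] at hlt; omega
      obtain ⟨B, hBP, hBA⟩ :=
        Finset.exists_of_ssubset (Finset.ssubset_iff_subset_ne.mpr ⟨hAP, hnepq⟩)
      have hlt2 := Finset.sum_lt_sum_of_subset hAP hBP hBA
        (Finset.card_pos.mpr (P.nonempty_of_mem_parts hBP)) (fun _ _ _ => Nat.zero_le _)
      rw [A.sum_card_parts, P.sum_card_parts] at hlt2
      omega
    exact Finpartition.ext (Finset.eq_of_subset_of_card_le hAP hcard)
end
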